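/- Let m > 1 and α ∈ ℝ \ {0}. There exists C = C(m), independent of x and α, such that for all x ∈ ℝ² with |x| > 0: |∫₀^∞ e^{iαt} e^{-|x|²/(4t)} t^{-m} dt| ≤ C min{ 1/(|α| |x|^{2m}), 1/|x|^{2(m-1)} }. -/

import Mathlib

open MeasureTheory Set Real Filter

lemma aux_int {a s : ℝ} (ha : 0 < a) (hs : 1 < s) :
    IntegrableOn (fun t : ℝ => Real.exp (-(a/t)) * t ^ (-s)) (Ioi 0) := by
  have h := (integrableOn_Ioi_comp_rpow_iff
      (fun u : ℝ => Real.exp (-(a*u)) * u ^ (s-2)) (by norm_num : (-1:ℝ) ≠ 0))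
  have hg : IntegrableOn (fun u : ℝ => Real.exp (-(a*u)) * u ^ (s-2)) (Ioi 0) := by
    have := integrableOn_rpow_mul_exp_neg_mul_rpow (p := 1) (s := s - 2) (b := a)
      (by linarith) zero_lt_one ha
    refine this.congr_fun (fun u hu => ?_) measurableSet_Ioi
    simp only [Real.rpow_one]
    ring_nf
  have h2 := h.mpr hg
  refine h2.congr_fun (fun t ht => ?_) measurableSet_Ioi
  have ht' : (0:ℝ) < t := ht
  have e1 : (t⁻¹) ^ (s-2) = t ^ (-(s-2)) := by
    rw [Real.rpow_neg ht'.le, ← Real.inv_rpow ht'.le]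
  have e2 : a * t⁻¹ = a / t := by ring
  simp only [smul_eq_mul, Real.rpow_neg_one, abs_neg, abs_one, one_mul, e1, e2]
  have e3 : t ^ (-s) = t ^ ((-1:ℝ)-1) * t ^ (-(s-2)) := by
    rw [← Real.rpow_add ht']; congr 1; ring
  rw [e3]; ring

lemma aux_val {a s : ℝ} (ha : 0 < a) (hs : 1 < s) :
    ∫ t in Ioi (0:ℝ), Real.exp (-(a/t)) * t ^ (-s) = (1/a) ^ (s-1) * Real.Gamma (s-1) := by
  have h := integral_comp_rpow_Ioi (fun u : ℝ => Real.exp (-(a*u)) * u ^ (s-2))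
      (by norm_num : (-1:ℝ) ≠ 0)
  have hL : ∫ t in Ioi (0:ℝ), Real.exp (-(a/t)) * t ^ (-s)
      = ∫ x in Ioi (0:ℝ), (|(-1:ℝ)| * x ^ ((-1:ℝ) - 1)) •
          (fun u : ℝ => Real.exp (-(a*u)) * u ^ (s-2)) (x ^ (-1:ℝ)) := by
    refine setIntegral_congr_fun measurableSet_Ioi (fun t ht => ?_)
    have ht' : (0:ℝ) < t := ht
    have e1 : (t⁻¹) ^ (s-2) = t ^ (-(s-2)) := by
      rw [Real.rpow_neg ht'.le, ← Real.inv_rpow ht'.le]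
    have e2 : a * t⁻¹ = a / t := by ring
    simp only [smul_eq_mul, Real.rpow_neg_one, abs_neg, abs_one, one_mul, e1, e2]
    have e3 : t ^ (-s) = t ^ ((-1:ℝ)-1) * t ^ (-(s-2)) := by
      rw [← Real.rpow_add ht']; congr 1; ring
    rw [e3]; ring
  rw [hL, h]
  have h2 := Real.integral_rpow_mul_exp_neg_mul_Ioi (a := s - 1) (r := a) (by linarith) ha
  rw [show s - 1 - 1 = s - 2 by ring] at h2
  rw [← h2]
  refine setIntegral_congr_fun measurableSet_Ioi (fun u hu => ?_)
  ring

theorem stmt_9 (m : ℝ) (hm : 1 < m) :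
    ∃ C > 0, ∀ (α : ℝ), α ≠ 0 → ∀ x : EuclideanSpace ℝ (Fin 2), x ≠ 0 →
      ‖∫ t in Ioi (0 : ℝ),
          Complex.exp (Complex.I * ((α * t : ℝ) : ℂ)) *
            ((Real.exp (-(‖x‖ ^ 2 / (4 * t))) / t ^ m : ℝ) : ℂ)‖
        ≤ C * min (1 / (|α| * ‖x‖ ^ (2 * m))) (1 / ‖x‖ ^ (2 * (m - 1))) := by
  have hm1 : (0:ℝ) < m - 1 := by linarith
  have hm0 : (0:ℝ) < m := by linarith
  set c₁ : ℝ := Real.Gamma (m-1) * 4 ^ (m-1) with hc₁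
  set c₂ : ℝ := 2 * Real.Gamma (m+1) * 4 ^ m with hc₂
  have hc₁0 : 0 < c₁ := by
    have := Real.Gamma_pos_of_pos hm1
    positivity
  have hc₂0 : 0 < c₂ := by
    have := Real.Gamma_pos_of_pos (by linarith : (0:ℝ) < m + 1)
    positivity
  refine ⟨max c₁ c₂, lt_max_of_lt_left hc₁0, fun α hα x hx => ?_⟩
  have hx0 : (0:ℝ) < ‖x‖ := norm_pos_iff.mpr hx
  set a : ℝ := ‖x‖^2/4 with ha_def
  have ha : 0 < a := by positivity
  set f : ℝ → ℝ := fun t => Real.exp (-(a/t)) * t ^ (-m) with hf_def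
  set F : ℝ → ℂ := fun t => Complex.exp (Complex.I * ((α * t : ℝ) : ℂ)) * (f t : ℂ) with hF_def
  -- rewrite the integrand
  have hI : (∫ t in Ioi (0:ℝ), Complex.exp (Complex.I * ((α * t : ℝ) : ℂ)) *
      ((Real.exp (-(‖x‖ ^ 2 / (4 * t))) / t ^ m : ℝ) : ℂ)) = ∫ t in Ioi (0:ℝ), F t := by
    refine setIntegral_congr_fun measurableSet_Ioi (fun t ht => ?_)
    have ht' : (0:ℝ) < t := ht
    have : Real.exp (-(‖x‖ ^ 2 / (4 * t))) / t ^ m = f t := by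
      have e1 : ‖x‖ ^ 2 / (4 * t) = a / t := by rw [ha_def, div_div]
      show _ = Real.exp (-(a/t)) * t ^ (-m)
      rw [e1, Real.rpow_neg ht'.le, div_eq_mul_inv]
    rw [hF_def, this]
  rw [hI]
  -- norms
  have hFnorm : ∀ t ∈ Ioi (0:ℝ), ‖F t‖ = f t := by
    intro t ht
    have ht' : (0:ℝ) < t := ht
    have hf_nn : 0 ≤ f t := by
      apply mul_nonneg (Real.exp_nonneg _) (Real.rpow_nonneg ht'.le _)
    rw [hF_def]
    simp only [norm_mul, Complex.norm_exp, Complex.norm_real, Real.norm_eq_abs]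
    rw [abs_of_nonneg hf_nn]
    have : (Complex.I * ((α * t : ℝ) : ℂ)).re = 0 := by simp
    rw [this, Real.exp_zero, one_mul]
  have hf_cont : ContinuousOn f (Ioi 0) := by
    intro t ht
    have ht' : (0:ℝ) < t := ht
    exact ((Real.continuous_exp.continuousAt.comp
      ((continuousAt_const.div continuousAt_id ht'.ne').neg)).mul
      (Real.continuousAt_rpow_const t (-m) (Or.inl ht'.ne'))).continuousWithinAt
  have hexp_cont : Continuous (fun t : ℝ => Complex.exp (Complex.I * ((α * t : ℝ) : ℂ))) := by
    fun_prop
  have hF_cont : ContinuousOn F (Ioi 0) :=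
    hexp_cont.continuousOn.mul (Complex.continuous_ofReal.comp_continuousOn hf_cont)
  have hf_int : IntegrableOn f (Ioi 0) := aux_int ha hm
  have hF_int : IntegrableOn F (Ioi 0) := by
    refine Integrable.mono' hf_int (hF_cont.aestronglyMeasurable measurableSet_Ioi) ?_
    refine (ae_restrict_iff' measurableSet_Ioi).2 (ae_of_all _ fun t ht => ?_)
    exact (hFnorm t ht).le
  -- bound B
  have hpow : ∀ r : ℝ, (1/a) ^ r = 4 ^ r * (1 / ‖x‖ ^ (2 * r)) := by
    intro r
    have e1 : (1:ℝ)/a = 4/‖x‖^2 := by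
      rw [ha_def, one_div_div]
    have e2 : ‖x‖ ^ (2 * r) = (‖x‖^2) ^ r := by
      rw [← Real.rpow_natCast ‖x‖ 2, ← Real.rpow_mul hx0.le]
      norm_num
    rw [e1, Real.div_rpow (by norm_num) (sq_nonneg _), e2, div_eq_mul_inv, one_div]
  have hB : ‖∫ t in Ioi (0:ℝ), F t‖ ≤ c₁ * (1 / ‖x‖ ^ (2 * (m - 1))) := by
    calc ‖∫ t in Ioi (0:ℝ), F t‖ ≤ ∫ t in Ioi (0:ℝ), ‖F t‖ :=
          norm_integral_le_integral_norm _
      _ = ∫ t in Ioi (0:ℝ), f t :=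
          setIntegral_congr_fun measurableSet_Ioi (fun t ht => hFnorm t ht)
      _ = (1/a) ^ (m-1) * Real.Gamma (m-1) := aux_val ha hm
      _ = c₁ * (1 / ‖x‖ ^ (2 * (m - 1))) := by rw [hpow, hc₁]; ring
  -- bound A
  have hA : ‖∫ t in Ioi (0:ℝ), F t‖ ≤ c₂ * (1 / (|α| * ‖x‖ ^ (2 * m))) := by
    set c : ℂ := Complex.I * α with hcdef
    have hc : c ≠ 0 := mul_ne_zero Complex.I_ne_zero (Complex.ofReal_ne_zero.2 hα)
    have hα0 : (0:ℝ) < |α| := abs_pos.mpr hα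
    have hcnorm : ‖c‖ = |α| := by
      rw [hcdef]; simp
    set f' : ℝ → ℝ := fun t => Real.exp (-(a/t)) * (a * t^(-(m+2)) - m * t^(-(m+1))) with hf'def
    set S : ℝ → ℂ := fun t =>
      Complex.exp (Complex.I * ((α * t : ℝ) : ℂ)) * (f' t : ℂ) / c with hSdef
    set g : ℝ → ℂ := fun t =>
      if 0 < t then Complex.exp (Complex.I * ((α * t : ℝ) : ℂ)) * (f t : ℂ) / c else 0 with hgdef
    set G : ℝ → ℂ := fun t => F t + S t with hGdef
    have hexpnorm : ∀ t : ℝ, ‖Complex.exp (Complex.I * ((α * t : ℝ) : ℂ))‖ = 1 := by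
      intro t
      rw [Complex.norm_exp]
      simp
    -- derivative of the exponential factor
    have hexp_deriv : ∀ t : ℝ, HasDerivAt (fun u : ℝ => Complex.exp (Complex.I * ((α * u : ℝ) : ℂ)))
        (c * Complex.exp (Complex.I * ((α * t : ℝ) : ℂ))) t := by
      intro t
      have hfe : (fun u : ℝ => Complex.exp (Complex.I * ((α * u : ℝ) : ℂ)))
          = fun u : ℝ => Complex.exp (c * u) := by
        funext u; rw [hcdef]; push_cast; ring_nf
      have h1 : HasDerivAt (fun y : ℂ => Complex.exp (c * y)) (Complex.exp (c * t) * c) (t:ℂ) := by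
        have := (Complex.hasDerivAt_exp (c * (t:ℂ))).comp (t:ℂ)
          ((hasDerivAt_id (t:ℂ)).const_mul c)
        simp at this; exact this
      have h2 := h1.comp_ofReal
      rw [hfe]
      convert h2 using 1
      rw [show Complex.I * ((α * t : ℝ) : ℂ) = c * t by rw [hcdef]; push_cast; ring]
      ring
    -- derivative of f
    have hf_deriv : ∀ t : ℝ, 0 < t → HasDerivAt f (f' t) t := by
      intro t ht
      have h2 : HasDerivAt (fun u : ℝ => Real.exp (-(a * u⁻¹)))
          (Real.exp (-(a * t⁻¹)) * (-(a * (-(t^2)⁻¹)))) t :=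
        (((hasDerivAt_inv ht.ne').const_mul a).neg).exp
      have h3 : HasDerivAt (fun u : ℝ => u ^ (-m)) (-m * t^(-m-1)) t :=
        Real.hasDerivAt_rpow_const (Or.inl ht.ne')
      have h4 := h2.mul h3
      have hfe : f = fun u : ℝ => Real.exp (-(a * u⁻¹)) * u ^ (-m) := by
        funext u; simp only [hf_def, div_eq_mul_inv]
      rw [hfe]
      refine h4.congr_deriv (Eq.symm ?_)
      have k1 : t ^ (-(m+2)) = (t^2)⁻¹ * t^(-m) := by
        rw [show -(m+2) = -(2:ℝ) + -m by ring, Real.rpow_add ht]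
        congr 1
        rw [Real.rpow_neg ht.le]
        congr 1
        rw [← Real.rpow_natCast t 2]
        norm_num
      have k2 : t ^ (-(m+1)) = t ^ (-m-1) := by rw [show -(m+1) = -m-1 by ring]
      have k3 : a * t⁻¹ = a / t := (div_eq_mul_inv a t).symm
      show Real.exp (-(a/t)) * (a * t ^ (-(m+2)) - m * t ^ (-(m+1))) = _
      rw [k1, k2, k3]
      ring
    -- derivative of g
    have hgderiv : ∀ t ∈ Ioi (0:ℝ), HasDerivAt g (G t) t := by
      intro t ht
      have ht' : (0:ℝ) < t := ht
      have heq : (fun u : ℝ => Complex.exp (Complex.I * ((α * u : ℝ) : ℂ)) * (f u : ℂ) / c)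
          =ᶠ[nhds t] g := by
        filter_upwards [Ioi_mem_nhds ht'] with u hu
        rw [hgdef]
        simp only [if_pos (mem_Ioi.mp hu)]
      have hD : HasDerivAt
          (fun u : ℝ => Complex.exp (Complex.I * ((α * u : ℝ) : ℂ)) * (f u : ℂ) / c) (G t) t := by
        have h3 := ((hexp_deriv t).mul (hf_deriv t ht').ofReal_comp).div_const c
        refine h3.congr_deriv (Eq.symm ?_)
        show F t + S t = _
        rw [hF_def, hSdef]
        field_simp
      exact hD.congr_of_eventuallyEq heq.symm
    -- limit of g at 0 from the right
    have hf_tendsto0 : Tendsto f (nhdsWithin 0 (Ioi 0)) (nhds 0) := by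
      have h1 : Tendsto (fun u : ℝ => u ^ m * Real.exp (-a * u)) atTop (nhds 0) :=
        tendsto_rpow_mul_exp_neg_mul_atTop_nhds_zero m a ha
      have h2 : Tendsto (fun t : ℝ => t⁻¹) (nhdsWithin 0 (Ioi 0)) atTop :=
        tendsto_inv_nhdsGT_zero
      refine (h1.comp h2).congr' ?_
      filter_upwards [self_mem_nhdsWithin] with t ht
      have ht' : (0:ℝ) < t := ht
      show (t⁻¹) ^ m * Real.exp (-a * t⁻¹) = f t
      rw [hf_def]
      show _ = Real.exp (-(a/t)) * t ^ (-m)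
      rw [Real.rpow_neg ht'.le, ← Real.inv_rpow ht'.le, div_eq_mul_inv, neg_mul, mul_comm]
    have hgnorm : ∀ t : ℝ, 0 < t → ‖g t‖ = f t / |α| := by
      intro t ht
      rw [hgdef]
      simp only [if_pos ht]
      rw [norm_div, norm_mul, hexpnorm, hcnorm, one_mul, Complex.norm_real]
      congr 1
      exact abs_of_nonneg (mul_nonneg (Real.exp_nonneg _) (Real.rpow_nonneg ht.le _))
    have hg_cont0 : ContinuousWithinAt g (Ici 0) 0 := by
      have hg0 : g 0 = 0 := by rw [hgdef]; simp
      have hIci : Ici (0:ℝ) = {0} ∪ Ioi 0 := by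
        ext y
        simp [le_iff_lt_or_eq, eq_comm, or_comm]
      rw [ContinuousWithinAt, hg0, hIci, nhdsWithin_union, tendsto_sup]
      constructor
      · rw [nhdsWithin_singleton]
        rw [show (0:ℂ) = g 0 from hg0.symm]
        exact tendsto_pure_nhds g 0
      · apply squeeze_zero_norm' ?_ (by simpa using hf_tendsto0.div_const |α|)
        filter_upwards [self_mem_nhdsWithin] with t ht
        exact (hgnorm t ht).le
    -- limit of g at infinity
    have hgtop : Tendsto g atTop (nhds 0) := by
      apply squeeze_zero_norm' ?_ (by simpa using (tendsto_rpow_neg_atTop hm0).div_const |α|)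
      filter_upwards [eventually_gt_atTop (0:ℝ)] with t ht
      rw [hgnorm t ht, hf_def]
      show Real.exp (-(a/t)) * t ^ (-m) / |α| ≤ _
      have h1 : Real.exp (-(a/t)) ≤ 1 :=
        Real.exp_le_one_iff.mpr (neg_nonpos.mpr (div_nonneg ha.le ht.le))
      have h2 : (0:ℝ) ≤ t ^ (-m) := Real.rpow_nonneg ht.le _
      have h3 : Real.exp (-(a/t)) * t ^ (-m) ≤ t ^ (-m) := by
        nth_rewrite 2 [← one_mul (t ^ (-m))]
        exact mul_le_mul_of_nonneg_right h1 h2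
      exact div_le_div_of_nonneg_right h3 hα0.le
    -- the bound for S
    set bnd : ℝ → ℝ := fun t =>
      (a * (Real.exp (-(a/t)) * t ^ (-(m+2))) + m * (Real.exp (-(a/t)) * t ^ (-(m+1)))) / |α|
      with hbnddef
    have i1 := aux_int ha (by linarith : (1:ℝ) < m+2)
    have i2 := aux_int ha (by linarith : (1:ℝ) < m+1)
    have hbnd_int : IntegrableOn bnd (Ioi 0) := by
      have : bnd = fun t => (a/|α|) * (Real.exp (-(a/t)) * t ^ (-(m+2)))
          + (m/|α|) * (Real.exp (-(a/t)) * t ^ (-(m+1))) := by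
        funext t; rw [hbnddef]; ring
      rw [this]
      exact (i1.const_mul _).add (i2.const_mul _)
    have hf'_cont : ContinuousOn f' (Ioi 0) := by
      intro t ht
      have ht' : (0:ℝ) < t := ht
      refine ContinuousAt.continuousWithinAt ?_
      exact (Real.continuous_exp.continuousAt.comp
          ((continuousAt_const.div continuousAt_id ht'.ne').neg)).mul
        (((Real.continuousAt_rpow_const t _ (Or.inl ht'.ne')).const_mul a).sub
          ((Real.continuousAt_rpow_const t _ (Or.inl ht'.ne')).const_mul m))
    have hS_cont : ContinuousOn S (Ioi 0) :=
      (hexp_cont.continuousOn.mul (Complex.continuous_ofReal.comp_continuousOn hf'_cont)).div_const c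
    have hS_norm : ∀ t ∈ Ioi (0:ℝ), ‖S t‖ ≤ bnd t := by
      intro t ht
      have ht' : (0:ℝ) < t := ht
      rw [hSdef]
      show ‖Complex.exp (Complex.I * ((α * t : ℝ) : ℂ)) * (f' t : ℂ) / c‖ ≤ _
      rw [norm_div, norm_mul, hexpnorm, hcnorm, one_mul, Complex.norm_real]
      rw [hbnddef]
      show |f' t| / |α| ≤ _
      refine div_le_div_of_nonneg_right ?_ hα0.le
      rw [hf'def]
      show |Real.exp (-(a/t)) * (a * t ^ (-(m+2)) - m * t ^ (-(m+1)))| ≤ _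
      rw [abs_mul, abs_of_nonneg (Real.exp_nonneg _)]
      have h1 : |a * t ^ (-(m+2)) - m * t ^ (-(m+1))|
          ≤ a * t ^ (-(m+2)) + m * t ^ (-(m+1)) := by
        refine (abs_sub _ _).trans ?_
        rw [abs_of_nonneg (mul_nonneg ha.le (Real.rpow_nonneg ht'.le _)),
          abs_of_nonneg (mul_nonneg hm0.le (Real.rpow_nonneg ht'.le _))]
      calc Real.exp (-(a/t)) * |a * t ^ (-(m+2)) - m * t ^ (-(m+1))|
          ≤ Real.exp (-(a/t)) * (a * t ^ (-(m+2)) + m * t ^ (-(m+1))) := by gcongr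
        _ = a * (Real.exp (-(a/t)) * t ^ (-(m+2))) + m * (Real.exp (-(a/t)) * t ^ (-(m+1))) := by
            ring
    have hS_int : IntegrableOn S (Ioi 0) := by
      refine Integrable.mono' hbnd_int (hS_cont.aestronglyMeasurable measurableSet_Ioi) ?_
      exact (ae_restrict_iff' measurableSet_Ioi).2 (ae_of_all _ hS_norm)
    have hG_int : IntegrableOn G (Ioi 0) := hF_int.add hS_int
    have hg0 : g 0 = 0 := by rw [hgdef]; simp
    have key : ∫ t in Ioi (0:ℝ), G t = 0 - g 0 :=
      integral_Ioi_of_hasDerivAt_of_tendsto hg_cont0 hgderiv hG_int hgtop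
    rw [hg0, sub_zero] at key
    have hsplit : ∫ t in Ioi (0:ℝ), G t
        = (∫ t in Ioi (0:ℝ), F t) + ∫ t in Ioi (0:ℝ), S t := integral_add hF_int hS_int
    have hFeq : (∫ t in Ioi (0:ℝ), F t) = -∫ t in Ioi (0:ℝ), S t := by
      rw [hsplit] at key
      exact eq_neg_of_add_eq_zero_left key
    have hnorm_le : ‖∫ t in Ioi (0:ℝ), S t‖ ≤ ∫ t in Ioi (0:ℝ), bnd t :=
      norm_integral_le_of_norm_le hbnd_int
        ((ae_restrict_iff' measurableSet_Ioi).2 (ae_of_all _ hS_norm))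
    have hbnd_val : ∫ t in Ioi (0:ℝ), bnd t
        = (a * ((1/a)^(m+1) * Real.Gamma (m+1)) + m * ((1/a)^m * Real.Gamma m)) / |α| := by
      have e : bnd = fun t => (a/|α|) * (Real.exp (-(a/t)) * t ^ (-(m+2)))
          + (m/|α|) * (Real.exp (-(a/t)) * t ^ (-(m+1))) := by
        funext t; rw [hbnddef]; ring
      rw [e, integral_add (i1.const_mul _) (i2.const_mul _), integral_const_mul,
        integral_const_mul, aux_val ha (by linarith : (1:ℝ) < m+2),
        aux_val ha (by linarith : (1:ℝ) < m+1),
        show m+2-1 = m+1 by ring, show m+1-1 = m by ring]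
      ring
    have hval2 : (a * ((1/a)^(m+1) * Real.Gamma (m+1)) + m * ((1/a)^m * Real.Gamma m)) / |α|
        = c₂ * (1/(|α| * ‖x‖^(2*m))) := by
      have e1 : ((1:ℝ)/a)^(m+1) = (1/a)^m * (1/a) := by
        rw [Real.rpow_add (one_div_pos.mpr ha) m 1, Real.rpow_one]
      have e2 : m * Real.Gamma m = Real.Gamma (m+1) := (Real.Gamma_add_one hm0.ne').symm
      have e4 : a * (1/a) = 1 := mul_one_div_cancel ha.ne'
      have e3 : a * ((1/a)^(m+1) * Real.Gamma (m+1)) + m * ((1/a)^m * Real.Gamma m)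
          = 2 * Real.Gamma (m+1) * (1/a)^m := by
        rw [e1]
        linear_combination (Real.Gamma (m+1) * ((1:ℝ)/a)^m) * e4 + ((1:ℝ)/a)^m * e2
      rw [e3, hpow m, hc₂]
      have hxm : (0:ℝ) < ‖x‖ ^ (2*m) := Real.rpow_pos_of_pos hx0 _
      field_simp
    calc ‖∫ t in Ioi (0:ℝ), F t‖ = ‖∫ t in Ioi (0:ℝ), S t‖ := by rw [hFeq, norm_neg]
      _ ≤ ∫ t in Ioi (0:ℝ), bnd t := hnorm_le
      _ = c₂ * (1/(|α| * ‖x‖^(2*m))) := by rw [hbnd_val, hval2]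
  have hA0 : 0 ≤ 1 / (|α| * ‖x‖ ^ (2 * m)) := by positivity
  have hB0 : 0 ≤ 1 / ‖x‖ ^ (2 * (m - 1)) := by positivity
  rw [mul_min_of_nonneg _ _ (le_max_of_le_left hc₁0.le)]
  exact le_min (hA.trans (mul_le_mul_of_nonneg_right (le_max_right _ _) hA0))
    (hB.trans (mul_le_mul_of_nonneg_right (le_max_left _ _) hB0))
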